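/- Let ξ₁, ξ₂ be nonzero quaternions. Identifying purely imaginary quaternions with ℝ³, the equalities −(ξ₁*·k·ξ₁)/4 = −(ξ₂*·k·ξ₂)/4 and (ξ₁*·j·ξ₁)/|ξ₁|² = (ξ₂*·j·ξ₂)/|ξ₂|² hold simultaneously if and only if ξ₂ = ξ₁ or ξ₂ = −ξ₁. -/

import Mathlib

open scoped Quaternion

/-- The quaternion `j`. -/
def qj : ℍ[ℝ] := ⟨0, 0, 1, 0⟩

/-- The quaternion `k`. -/
def qk : ℍ[ℝ] := ⟨0, 0, 0, 1⟩

/-- The identification of purely imaginary quaternions with `ℝ³`: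
`xi + yj + zk ↔ (x, y, z)`. -/
noncomputable def imVec (ξ : ℍ[ℝ]) : EuclideanSpace ℝ (Fin 3) := WithLp.toLp 2 ![ξ.imI, ξ.imJ, ξ.imK]

lemma conj_re_zero (ξ q : ℍ[ℝ]) (hq : q.re = 0) : (star ξ * q * ξ).re = 0 := by
  simp [Quaternion.re_mul, hq]; ring

lemma norm_qk : ‖qk‖ = 1 := by
  have h : Quaternion.normSq qk = 1 := by rw [Quaternion.normSq_def']; simp [qk]
  have := Quaternion.normSq_eq_norm_mul_self qk
  nlinarith [norm_nonneg qk]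

lemma norm_qj : ‖qj‖ = 1 := by
  have h : Quaternion.normSq qj = 1 := by rw [Quaternion.normSq_def']; simp [qj]
  have := Quaternion.normSq_eq_norm_mul_self qj
  nlinarith [norm_nonneg qj]

lemma comm_real (η : ℍ[ℝ]) (hk : qk * η = η * qk) (hj : qj * η = η * qj) :
    η = (η.re : ℍ[ℝ]) := by
  rw [Quaternion.ext_iff] at hk hj ⊢
  simp only [Quaternion.re_mul, Quaternion.imI_mul, Quaternion.imJ_mul,
    Quaternion.imK_mul] at hk hj
  simp [qk, qj, Quaternion.re_mul, Quaternion.imI_mul, Quaternion.imJ_mul,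
    Quaternion.imK_mul] at hk hj ⊢
  refine ⟨?_, ?_, ?_⟩ <;> linarith [hk.1, hk.2, hj.1, hj.2]

lemma imVec_eq (a b : ℍ[ℝ]) (ha : a.re = 0) (hb : b.re = 0) (h : imVec a = imVec b) :
    a = b := by
  have h0 := congrArg (· 0) h
  have h1 := congrArg (· 1) h
  have h2 := congrArg (· 2) h
  simp [imVec] at h0 h1 h2
  apply Quaternion.ext
  · rw [ha, hb]
  · exact h0
  · exact h1
  · exact h2

/-- The two-to-one property of the map `φ₁(ξ) = (−(ξ*kξ)/4, (ξ*jξ)/|ξ|²)` from Lemma 2.2: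
for nonzero quaternions `ξ₁, ξ₂`, one has `φ₁(ξ₁) = φ₁(ξ₂)` if and only if `ξ₂ = ±ξ₁`. -/
theorem quaternion_phi_one_two_to_one (ξ₁ ξ₂ : ℍ[ℝ]) (h₁ : ξ₁ ≠ 0) (h₂ : ξ₂ ≠ 0) :
    ((-(1 : ℝ) / 4) • imVec (star ξ₁ * qk * ξ₁) = (-(1 : ℝ) / 4) • imVec (star ξ₂ * qk * ξ₂) ∧
      (‖ξ₁‖ ^ 2)⁻¹ • imVec (star ξ₁ * qj * ξ₁) = (‖ξ₂‖ ^ 2)⁻¹ • imVec (star ξ₂ * qj * ξ₂)) ↔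
    (ξ₂ = ξ₁ ∨ ξ₂ = -ξ₁) := by
  constructor
  · rintro ⟨H1, H2⟩
    -- first equality as quaternions
    have hV1 : imVec (star ξ₁ * qk * ξ₁) = imVec (star ξ₂ * qk * ξ₂) :=
      smul_right_injective (EuclideanSpace ℝ (Fin 3))
        (by norm_num : (-(1:ℝ)/4) ≠ 0) H1
    have hk : star ξ₁ * qk * ξ₁ = star ξ₂ * qk * ξ₂ :=
      imVec_eq _ _ (conj_re_zero _ _ rfl) (conj_re_zero _ _ rfl) hV1
    -- equal norms
    have hnorm : ‖ξ₁‖ = ‖ξ₂‖ := by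
      have := congrArg (‖·‖) hk
      simp only [norm_mul, Quaternion.norm_star, norm_qk, mul_one, one_mul] at this
      nlinarith [norm_nonneg ξ₁, norm_nonneg ξ₂, norm_pos_iff.2 h₁, norm_pos_iff.2 h₂]
    -- second equality as quaternions
    have hV2 : imVec (star ξ₁ * qj * ξ₁) = imVec (star ξ₂ * qj * ξ₂) := by
      rw [hnorm] at H2
      exact smul_right_injective (EuclideanSpace ℝ (Fin 3))
        (inv_ne_zero (pow_ne_zero 2 (norm_ne_zero_iff.2 h₂))) H2
    have hj : star ξ₁ * qj * ξ₁ = star ξ₂ * qj * ξ₂ :=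
      imVec_eq _ _ (conj_re_zero _ _ rfl) (conj_re_zero _ _ rfl) hV2
    -- set up η
    set η : ℍ[ℝ] := ξ₂ * star ξ₁ with hη
    have hn12 : Quaternion.normSq ξ₁ = Quaternion.normSq ξ₂ := by
      rw [Quaternion.normSq_eq_norm_mul_self, Quaternion.normSq_eq_norm_mul_self, hnorm]
    have hncast : ((Quaternion.normSq ξ₁ : ℝ) : ℍ[ℝ]) ≠ 0 := fun h =>
      (Quaternion.normSq_ne_zero).2 h₁ (Quaternion.coe_injective (by simpa using h))
    have comm : ∀ q : ℍ[ℝ], star ξ₁ * q * ξ₁ = star ξ₂ * q * ξ₂ → q * η = η * q := by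
      intro q hq
      have e1 : ξ₂ * (star ξ₁ * q * ξ₁) * star ξ₁ = ξ₂ * (star ξ₂ * q * ξ₂) * star ξ₁ := by
        rw [hq]
      have lhs : ξ₂ * (star ξ₂ * q * ξ₂) * star ξ₁
          = ((Quaternion.normSq ξ₂ : ℝ) : ℍ[ℝ]) * (q * η) := by
        rw [show ξ₂ * (star ξ₂ * q * ξ₂) * star ξ₁
            = (ξ₂ * star ξ₂) * (q * (ξ₂ * star ξ₁)) by simp [mul_assoc],
          Quaternion.self_mul_star, hη]
      have rhs : ξ₂ * (star ξ₁ * q * ξ₁) * star ξ₁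
          = ((Quaternion.normSq ξ₁ : ℝ) : ℍ[ℝ]) * (η * q) := by
        rw [show ξ₂ * (star ξ₁ * q * ξ₁) * star ξ₁
            = ((ξ₂ * star ξ₁) * q) * (ξ₁ * star ξ₁) by simp [mul_assoc],
          Quaternion.self_mul_star, Quaternion.coe_commutes, hη]
      have main : ((Quaternion.normSq ξ₁ : ℝ) : ℍ[ℝ]) * (η * q)
          = ((Quaternion.normSq ξ₁ : ℝ) : ℍ[ℝ]) * (q * η) := by
        rw [← rhs, e1, lhs, ← hn12]
      exact (mul_left_cancel₀ hncast main).symm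
    have hηreal : η = (η.re : ℍ[ℝ]) :=
      comm_real η (comm qk hk) (comm qj hj)
    -- ξ₂ * normSq ξ₁ = η.re * ξ₁
    have key : ξ₂ * ((Quaternion.normSq ξ₁ : ℝ) : ℍ[ℝ]) = ((η.re : ℝ) : ℍ[ℝ]) * ξ₁ := by
      have := congrArg (fun x => x * ξ₁) hηreal
      simp only [hη] at this
      rw [mul_assoc, Quaternion.star_mul_self] at this
      exact this
    -- |η.re| = normSq ξ₁
    have habs : |η.re| = Quaternion.normSq ξ₁ := by
      have h1' : ‖η‖ = ‖ξ₁‖ * ‖ξ₁‖ := by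
        rw [hη, norm_mul, Quaternion.norm_star, ← hnorm]
      have h2' : ‖η‖ = |η.re| := by
        conv_lhs => rw [hηreal]
        rw [Quaternion.norm_coe, Real.norm_eq_abs]
      rw [Quaternion.normSq_eq_norm_mul_self, ← h1', h2']
    rcases (abs_eq (Quaternion.normSq_nonneg (a := ξ₁))).mp habs with hr | hr
    · left
      have : ξ₂ * ((Quaternion.normSq ξ₁ : ℝ) : ℍ[ℝ])
          = ξ₁ * ((Quaternion.normSq ξ₁ : ℝ) : ℍ[ℝ]) := by
        rw [key, hr, Quaternion.coe_commutes]
      exact mul_right_cancel₀ hncast this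
    · right
      have : ξ₂ * ((Quaternion.normSq ξ₁ : ℝ) : ℍ[ℝ])
          = (-ξ₁) * ((Quaternion.normSq ξ₁ : ℝ) : ℍ[ℝ]) := by
        rw [key, hr]
        push_cast
        rw [neg_mul, neg_mul, Quaternion.coe_commutes]
      exact mul_right_cancel₀ hncast this
  · rintro (rfl | rfl)
    · exact ⟨rfl, rfl⟩
    · constructor <;> simp [star_neg, neg_mul, mul_neg, neg_neg]
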